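/- In the fixed-design model, assume rank(A) ≥ k and σ_k(A) > σ_{k+1}(A). The PCR solution x_k := V_{A,k}(A V_{A,k})^+ b satisfies 𝔈(x_k) ≤ ‖x*‖₂²·σ_{k+1}(A)²/n + σ²k/n. -/

import Mathlib

open Matrix MeasureTheory

noncomputable section

/-- Euclidean norm of a vector in `ℝ^n`. -/
def vnorm {n : ℕ} (v : Fin n → ℝ) : ℝ := Real.sqrt (∑ i, v i ^ 2)

/-- Spectral norm of a matrix (operator norm as a map between Euclidean spaces). -/
def spec {m n : ℕ} (M : Matrix (Fin m) (Fin n) ℝ) : ℝ :=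
  ‖LinearMap.toContinuousLinearMap (Matrix.toEuclideanLin M)‖

/-- The four Moore-Penrose conditions. -/
def IsMP {m n : ℕ} (X : Matrix (Fin m) (Fin n) ℝ) (Y : Matrix (Fin n) (Fin m) ℝ) : Prop :=
  X * Y * X = X ∧ Y * X * Y = Y ∧ (X * Y)ᵀ = X * Y ∧ (Y * X)ᵀ = Y * X

/-- The Moore-Penrose pseudoinverse (it always exists and is unique, so this choice-based
definition picks out exactly the Moore-Penrose pseudoinverse). -/
def pinv {m n : ℕ} (X : Matrix (Fin m) (Fin n) ℝ) : Matrix (Fin n) (Fin m) ℝ := by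
  classical exact if h : ∃ Y, IsMP X Y then h.choose else 0

/-- Orthogonal projection onto the column space of a matrix: `P_X = X X⁺`. -/
def projCol {m n : ℕ} (X : Matrix (Fin m) (Fin n) ℝ) : Matrix (Fin m) (Fin m) ℝ := X * pinv X

/-- Distance between column spaces: `d₂(U, W) = ‖P_U - P_W‖₂`. -/
def d2 {m p q : ℕ} (U : Matrix (Fin m) (Fin p) ℝ) (W : Matrix (Fin m) (Fin q) ℝ) : ℝ :=
  spec (projCol U - projCol W)

/-- `(U, s, V)` is a thin SVD of `X`: orthonormal columns, nonincreasing nonnegative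
singular values, and `X = U (diag s) Vᵀ`. -/
def IsThinSVD {m n p : ℕ} (X : Matrix (Fin m) (Fin n) ℝ) (U : Matrix (Fin m) (Fin p) ℝ)
    (s : Fin p → ℝ) (V : Matrix (Fin n) (Fin p) ℝ) : Prop :=
  Uᵀ * U = 1 ∧ Vᵀ * V = 1 ∧ Antitone s ∧ (∀ i, 0 ≤ s i) ∧ X = U * Matrix.diagonal s * Vᵀ

/-- The matrix of the first `k` columns. -/
def firstCols {m p : ℕ} (U : Matrix (Fin m) (Fin p) ℝ) (k : ℕ) (h : k ≤ p) :
    Matrix (Fin m) (Fin k) ℝ := U.submatrix id (Fin.castLE h)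

/-- The matrix of the remaining columns (columns `k+1, …, p` in 1-based indexing). -/
def tailCols {m p : ℕ} (U : Matrix (Fin m) (Fin p) ℝ) (k : ℕ) (h : k ≤ p) :
    Matrix (Fin m) (Fin (p - k)) ℝ :=
  U.submatrix id (fun j => ⟨k + j.1, by have := j.2; omega⟩)

/-- `sv s i` is the `i`-th singular value (1-indexed), `0` past the end. -/
def sv {p : ℕ} (s : Fin p → ℝ) (i : ℕ) : ℝ := by
  classical exact if h : i - 1 < p then s ⟨i - 1, h⟩ else 0

end


section Helpers
open ProbabilityTheory

lemma isMP_unique {m n : ℕ} {X : Matrix (Fin m) (Fin n) ℝ} {Y Z : Matrix (Fin n) (Fin m) ℝ}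
    (hY : IsMP X Y) (hZ : IsMP X Z) : Y = Z := by
  obtain ⟨hY1, hY2, hY3, hY4⟩ := hY
  obtain ⟨hZ1, hZ2, hZ3, hZ4⟩ := hZ
  have e1 : X * Y = X * Z := by
    calc X * Y = (X * Z * X) * Y := by rw [hZ1]
    _ = (X * Z) * (X * Y) := by rw [Matrix.mul_assoc]
    _ = (X * Z)ᵀ * (X * Y)ᵀ := by rw [hZ3, hY3]
    _ = Zᵀ * (X * (Y * X))ᵀ := by
        simp only [Matrix.transpose_mul, Matrix.mul_assoc]
    _ = Zᵀ * Xᵀ := by rw [← Matrix.mul_assoc X Y X, hY1]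
    _ = (X * Z)ᵀ := by rw [Matrix.transpose_mul]
    _ = X * Z := hZ3
  have e2 : Y * X = Z * X := by
    calc Y * X = Y * (X * Z * X) := by rw [hZ1]
    _ = (Y * X) * (Z * X) := by
        simp only [Matrix.mul_assoc]
    _ = (Y * X)ᵀ * (Z * X)ᵀ := by rw [hZ4, hY4]
    _ = ((X * (Y * X))ᵀ) * Zᵀ := by
        simp only [Matrix.transpose_mul, Matrix.mul_assoc]
    _ = Xᵀ * Zᵀ := by rw [← Matrix.mul_assoc X Y X, hY1]
    _ = (Z * X)ᵀ := by rw [Matrix.transpose_mul]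
    _ = Z * X := hZ4
  calc Y = Y * X * Y := hY2.symm
  _ = Y * (X * Z) := by rw [Matrix.mul_assoc, e1]
  _ = (Y * X) * Z := by rw [Matrix.mul_assoc]
  _ = Z * X * Z := by rw [e2]
  _ = Z := hZ2

lemma pinv_eq {m n : ℕ} {X : Matrix (Fin m) (Fin n) ℝ} {Y : Matrix (Fin n) (Fin m) ℝ}
    (hY : IsMP X Y) : pinv X = Y := by
  have h : ∃ Y, IsMP X Y := ⟨Y, hY⟩
  rw [pinv, dif_pos h]
  exact isMP_unique h.choose_spec hY

lemma pinv_isMP {m n : ℕ} {X : Matrix (Fin m) (Fin n) ℝ} (h : ∃ Y, IsMP X Y) :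
    IsMP X (pinv X) := by
  rw [pinv_eq h.choose_spec]; exact h.choose_spec

lemma sandwich {m n q p : ℕ} (W1 : Matrix (Fin m) (Fin p) ℝ) (a : Fin p → ℝ)
    {V : Matrix (Fin n) (Fin p) ℝ} (hV : Vᵀ * V = 1) (b : Fin p → ℝ)
    (W2 : Matrix (Fin q) (Fin p) ℝ) :
    (W1 * Matrix.diagonal a * Vᵀ) * (V * Matrix.diagonal b * W2ᵀ)
      = W1 * Matrix.diagonal (fun i => a i * b i) * W2ᵀ := by
  have h1 : Vᵀ * (V * (Matrix.diagonal b * W2ᵀ)) = Matrix.diagonal b * W2ᵀ := by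
    rw [← Matrix.mul_assoc, hV, Matrix.one_mul]
  calc (W1 * Matrix.diagonal a * Vᵀ) * (V * Matrix.diagonal b * W2ᵀ)
      = W1 * (Matrix.diagonal a * (Vᵀ * (V * (Matrix.diagonal b * W2ᵀ)))) := by
        simp only [Matrix.mul_assoc]
    _ = W1 * (Matrix.diagonal a * (Matrix.diagonal b * W2ᵀ)) := by rw [h1]
    _ = W1 * Matrix.diagonal (fun i => a i * b i) * W2ᵀ := by
        rw [← Matrix.diagonal_mul_diagonal]; simp only [Matrix.mul_assoc]

lemma isMP_svd {m n p : ℕ} {U : Matrix (Fin m) (Fin p) ℝ} (s : Fin p → ℝ)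
    {V : Matrix (Fin n) (Fin p) ℝ} (hU : Uᵀ * U = 1) (hV : Vᵀ * V = 1) :
    IsMP (U * Matrix.diagonal s * Vᵀ) (V * Matrix.diagonal (fun i => (s i)⁻¹) * Uᵀ) := by
  set t : Fin p → ℝ := fun i => (s i)⁻¹ with ht
  have hst : (fun i => (s i * t i) * s i) = s := by
    funext i; by_cases h : s i = 0 <;> simp [ht, h]
  have hts : (fun i => (t i * s i) * t i) = t := by
    funext i; by_cases h : s i = 0 <;> simp [ht, h]
  have hXY : (U * Matrix.diagonal s * Vᵀ) * (V * Matrix.diagonal t * Uᵀ)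
      = U * Matrix.diagonal (fun i => s i * t i) * Uᵀ := sandwich U s hV t U
  have hYX : (V * Matrix.diagonal t * Uᵀ) * (U * Matrix.diagonal s * Vᵀ)
      = V * Matrix.diagonal (fun i => t i * s i) * Vᵀ := sandwich V t hU s V
  refine ⟨?_, ?_, ?_, ?_⟩
  · rw [hXY]
    have h2 := sandwich U (fun i => s i * t i) hU s V
    rw [h2, hst]
  · rw [hYX]
    have h2 := sandwich V (fun i => t i * s i) hV t U
    rw [h2, hts]
  · rw [hXY]
    simp only [Matrix.transpose_mul, Matrix.transpose_transpose, Matrix.diagonal_transpose,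
      Matrix.mul_assoc]
  · rw [hYX]
    simp only [Matrix.transpose_mul, Matrix.transpose_transpose, Matrix.diagonal_transpose,
      Matrix.mul_assoc]

section Prob
variable {Ω : Type} [MeasurableSpace Ω] (μ : Measure Ω) [IsProbabilityMeasure μ]
  {n : ℕ} (ξ : Ω → Fin n → ℝ)

lemma integrable_xi (hL2 : ∀ i, MemLp (fun ω => ξ ω i) 2 μ) (i : Fin n) :
    Integrable (fun ω => ξ ω i) μ := (hL2 i).integrable one_le_two

lemma integrable_xi_mul (hL2 : ∀ i, MemLp (fun ω => ξ ω i) 2 μ) (j l : Fin n) :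
    Integrable (fun ω => ξ ω j * ξ ω l) μ := by
  rw [← memLp_one_iff_integrable]
  exact (hL2 l).smul (hL2 j)

lemma integral_linear (hL2 : ∀ i, MemLp (fun ω => ξ ω i) 2 μ)
    (hmean : ∀ i, ∫ ω, ξ ω i ∂μ = 0) (a : Fin n → ℝ) :
    ∫ ω, (∑ j, a j * ξ ω j) ∂μ = 0 := by
  rw [integral_finset_sum _ (fun j _ => (integrable_xi μ ξ hL2 j).const_mul (a j))]
  simp only [integral_const_mul, hmean, mul_zero, Finset.sum_const_zero]

lemma integral_cross (hmeas : ∀ i, Measurable fun ω => ξ ω i)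
    (hindep : iIndepFun (fun i ω => ξ ω i) μ)
    (sig2 : ℝ) (hmean : ∀ i, ∫ ω, ξ ω i ∂μ = 0)
    (hvar : ∀ i, ∫ ω, (ξ ω i) ^ 2 ∂μ = sig2) (j l : Fin n) :
    ∫ ω, ξ ω j * ξ ω l ∂μ = if j = l then sig2 else 0 := by
  by_cases hjl : j = l
  · subst hjl; simp only [if_pos rfl, ← hvar j]; congr 1; funext ω; ring
  · rw [if_neg hjl]
    have h := (hindep.indepFun hjl).integral_mul_eq_mul_integral
      (hmeas j).aestronglyMeasurable (hmeas l).aestronglyMeasurable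
    calc ∫ ω, ξ ω j * ξ ω l ∂μ
        = ∫ ω, ((fun ω => ξ ω j) * fun ω => ξ ω l) ω ∂μ := rfl
      _ = (∫ ω, ξ ω j ∂μ) * ∫ ω, ξ ω l ∂μ := h
      _ = 0 := by rw [hmean j, zero_mul]

lemma integral_linear_sq (hmeas : ∀ i, Measurable fun ω => ξ ω i)
    (hL2 : ∀ i, MemLp (fun ω => ξ ω i) 2 μ)
    (hindep : iIndepFun (fun i ω => ξ ω i) μ)
    (sig2 : ℝ) (hmean : ∀ i, ∫ ω, ξ ω i ∂μ = 0)
    (hvar : ∀ i, ∫ ω, (ξ ω i) ^ 2 ∂μ = sig2) (a : Fin n → ℝ) :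
    ∫ ω, (∑ j, a j * ξ ω j) ^ 2 ∂μ = sig2 * ∑ j, (a j) ^ 2 := by
  have hexp : ∀ ω, (∑ j, a j * ξ ω j) ^ 2
      = ∑ j, ∑ l, (a j * a l) * (ξ ω j * ξ ω l) := by
    intro ω
    rw [sq, Finset.sum_mul_sum]
    refine Finset.sum_congr rfl fun j _ => Finset.sum_congr rfl fun l _ => by ring
  simp only [hexp]
  rw [integral_finset_sum _ (fun j _ => integrable_finset_sum _
    (fun l _ => ((integrable_xi_mul μ ξ hL2 j l).const_mul (a j * a l))))]
  have : ∀ j : Fin n, ∫ ω, (∑ l, (a j * a l) * (ξ ω j * ξ ω l)) ∂μ = a j ^ 2 * sig2 := by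
    intro j
    rw [integral_finset_sum _ (fun l _ => ((integrable_xi_mul μ ξ hL2 j l).const_mul (a j * a l)))]
    simp only [integral_const_mul, integral_cross μ ξ hmeas hindep sig2 hmean hvar j]
    rw [Finset.sum_congr rfl (fun l _ => by rw [mul_ite, mul_zero])]
    rw [Finset.sum_ite_eq Finset.univ j (fun l => a j * a l * sig2)]
    simp only [Finset.mem_univ, if_true, sq]
  simp only [this]
  rw [← Finset.sum_mul, mul_comm]
end Prob

lemma dot_self_eq_sum_sq {p : ℕ} (z : Fin p → ℝ) : z ⬝ᵥ z = ∑ l, z l ^ 2 := by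
  simp [dotProduct, sq]

lemma sum_sq_mulVec {m p : ℕ} {U : Matrix (Fin m) (Fin p) ℝ} (hU : Uᵀ * U = 1)
    (z : Fin p → ℝ) : ∑ i, (U.mulVec z i) ^ 2 = ∑ l, z l ^ 2 := by
  rw [← dot_self_eq_sum_sq, ← dot_self_eq_sum_sq]
  rw [Matrix.dotProduct_mulVec, ← Matrix.mulVec_transpose, Matrix.mulVec_mulVec, hU,
    Matrix.one_mulVec]

lemma sum_sq_tmulVec_le {d p : ℕ} {V : Matrix (Fin d) (Fin p) ℝ} (hV : Vᵀ * V = 1)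
    (x : Fin d → ℝ) : ∑ l, (Vᵀ.mulVec x l) ^ 2 ≤ ∑ i, x i ^ 2 := by
  set y : Fin p → ℝ := Vᵀ.mulVec x with hy
  have h1 : ∑ l, y l ^ 2 = x ⬝ᵥ (V.mulVec y) := by
    rw [← dot_self_eq_sum_sq, hy, Matrix.dotProduct_mulVec, Matrix.vecMul_transpose,
      dotProduct_comm]
  have h2 : ∑ i, (V.mulVec y i) ^ 2 = ∑ l, y l ^ 2 := sum_sq_mulVec hV y
  have hcs : (∑ i, x i * (V.mulVec y) i) ^ 2 ≤ (∑ i, x i ^ 2) * ∑ i, (V.mulVec y i) ^ 2 :=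
    Finset.sum_mul_sq_le_sq_mul_sq Finset.univ x (V.mulVec y)
  have hdot : x ⬝ᵥ (V.mulVec y) = ∑ i, x i * (V.mulVec y) i := rfl
  have hynn : (0:ℝ) ≤ ∑ l, y l ^ 2 := Finset.sum_nonneg fun l _ => sq_nonneg _
  have hxnn : (0:ℝ) ≤ ∑ i, x i ^ 2 := Finset.sum_nonneg fun i _ => sq_nonneg _
  nlinarith [h1, h2, hcs]

lemma sum_sq_proj {m k : ℕ} {Uk : Matrix (Fin m) (Fin k) ℝ} (hUk : Ukᵀ * Uk = 1) :
    ∑ i, ∑ j, ((Uk * Ukᵀ) i j) ^ 2 = (k : ℝ) := by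
  set P := Uk * Ukᵀ with hP
  have hPsym : Pᵀ = P := by rw [hP, Matrix.transpose_mul, Matrix.transpose_transpose]
  have hPP : P * P = P := by
    rw [hP, Matrix.mul_assoc, ← Matrix.mul_assoc Ukᵀ Uk Ukᵀ, hUk, Matrix.one_mul]
  have h1 : ∑ i, ∑ j, (P i j) ^ 2 = (P * Pᵀ).trace := by
    simp [Matrix.trace, Matrix.diag, Matrix.mul_apply, sq, Matrix.transpose_apply]
  rw [h1, hPsym, hPP, hP, Matrix.trace_mul_comm, hUk, Matrix.trace_one]
  simp

lemma mul_oneSubmatrix {m q k : ℕ} (M : Matrix (Fin m) (Fin q) ℝ) (h : k ≤ q) :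
    M * (1 : Matrix (Fin q) (Fin q) ℝ).submatrix id (Fin.castLE h) = M.submatrix id (Fin.castLE h) := by
  ext i j
  rw [Matrix.mul_apply]
  simp only [Matrix.submatrix_apply, id_eq, Matrix.one_apply]
  rw [Finset.sum_eq_single (Fin.castLE h j)]
  · simp
  · intro l _ hl; simp [hl]
  · simp

lemma vnorm_sq {n : ℕ} (v : Fin n → ℝ) : vnorm v ^ 2 = ∑ i, v i ^ 2 :=
  Real.sq_sqrt (Finset.sum_nonneg fun i _ => sq_nonneg _)

end Helpers

open ProbabilityTheory in
/-- Corollary: excess risk of the PCR solution.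
In the fixed-design model, `𝔈(x_k) ≤ ‖x*‖² σ_{k+1}(A)² / n + σ² k / n`, where
`x_k = V_{A,k}(A V_{A,k})⁺ b`. -/
theorem statement8
    {n d k : ℕ} (hk0 : 0 < k)
    (A : Matrix (Fin n) (Fin d) ℝ)
    (UA : Matrix (Fin n) (Fin (min n d)) ℝ) (sA : Fin (min n d) → ℝ)
    (VA : Matrix (Fin d) (Fin (min n d)) ℝ)
    (hSVD : IsThinSVD A UA sA VA)
    (hkrank : k ≤ A.rank) (hkp : k ≤ min n d)
    (hgap : sv sA (k + 1) < sv sA k)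
    -- the fixed-design statistical model
    {Ω : Type} [MeasurableSpace Ω] (μ : Measure Ω) [IsProbabilityMeasure μ]
    (ξ : Ω → Fin n → ℝ)
    (hmeas : ∀ i, Measurable fun ω => ξ ω i)
    (hL2 : ∀ i, MemLp (fun ω => ξ ω i) 2 μ)
    (hindep : iIndepFun (fun i ω => ξ ω i) μ)
    (sig2 : ℝ)
    (hmean : ∀ i, ∫ ω, ξ ω i ∂μ = 0)
    (hvar : ∀ i, ∫ ω, (ξ ω i) ^ 2 ∂μ = sig2)
    (f : Fin n → ℝ) (xstar : Fin d → ℝ)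
    (hxstar : A.mulVec xstar = (projCol A).mulVec f) :
    (∫ ω, vnorm (A.mulVec ((firstCols VA k hkp * pinv (A * firstCols VA k hkp)).mulVec
          (f + ξ ω)) - A.mulVec xstar) ^ 2 ∂μ) / (n : ℝ)
      ≤ vnorm xstar ^ 2 * sv sA (k + 1) ^ 2 / (n : ℝ) + sig2 * (k : ℝ) / (n : ℝ) := by
  classical
  obtain ⟨hU, hV, hmono, hposA, hAeq⟩ := hSVD
  set Vk : Matrix (Fin d) (Fin k) ℝ := firstCols VA k hkp with hVkdef
  set Uk : Matrix (Fin n) (Fin k) ℝ := firstCols UA k hkp with hUkdef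
  set ds : Fin k → ℝ := fun j => sA (Fin.castLE hkp j) with hdsdef
  have hn0 : 0 < n := lt_of_lt_of_le hk0 (hkp.trans (min_le_left n d))
  have hsk1 : k - 1 < min n d := by omega
  -- singular value positivity
  have hsv1nn : 0 ≤ sv sA (k + 1) := by
    rw [sv]; split
    · exact hposA _
    · exact le_refl 0
  have hsvk : sv sA k = sA ⟨k - 1, hsk1⟩ := by
    rw [sv]; rw [dif_pos hsk1]
  have hskpos : 0 < sA ⟨k - 1, hsk1⟩ := by
    rw [← hsvk]; exact lt_of_le_of_lt hsv1nn hgap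
  have hdspos : ∀ j : Fin k, 0 < ds j := by
    intro j
    refine lt_of_lt_of_le hskpos (hmono ?_)
    exact Fin.mk_le_mk.mpr (by omega)
  have hdsne : ∀ j : Fin k, ds j ≠ 0 := fun j => (hdspos j).ne'
  -- orthonormality of the truncated columns
  have hUkUk : Ukᵀ * Uk = 1 := by
    ext i j
    have h := congrFun (congrFun hU (Fin.castLE hkp i)) (Fin.castLE hkp j)
    simp only [Matrix.mul_apply, Matrix.transpose_apply] at h
    simp only [Matrix.mul_apply, Matrix.transpose_apply, hUkdef, firstCols,
      Matrix.submatrix_apply, id_eq]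
    rw [h]
    simp [Matrix.one_apply, Fin.castLE_inj]
  -- the 0/1 selector matrix
  set E : Matrix (Fin (min n d)) (Fin k) ℝ :=
    (1 : Matrix (Fin (min n d)) (Fin (min n d)) ℝ).submatrix id (Fin.castLE hkp) with hEdef
  have hVkE : VA * E = Vk := mul_oneSubmatrix VA hkp
  have hUkE : UA * E = Uk := mul_oneSubmatrix UA hkp
  have hVV : VAᵀ * Vk = E := by
    rw [← hVkE, ← Matrix.mul_assoc, hV, Matrix.one_mul]
  have hED : Matrix.diagonal sA * E = E * Matrix.diagonal ds := by
    ext i j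
    rw [Matrix.diagonal_mul, Matrix.mul_diagonal]
    simp only [hEdef, Matrix.submatrix_apply, id_eq, Matrix.one_apply]
    by_cases h : i = Fin.castLE hkp j
    · subst h; simp [hdsdef]
    · simp [h]
  -- A Vk = Uk D
  have hAVk : A * Vk = Uk * Matrix.diagonal ds := by
    calc A * Vk = UA * Matrix.diagonal sA * (VAᵀ * Vk) := by
          rw [hAeq]; simp only [Matrix.mul_assoc]
    _ = UA * (Matrix.diagonal sA * E) := by rw [hVV, Matrix.mul_assoc]
    _ = UA * E * Matrix.diagonal ds := by rw [hED, Matrix.mul_assoc]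
    _ = Uk * Matrix.diagonal ds := by rw [hUkE]
  -- pseudoinverse of B = A Vk
  have hBMP : IsMP (A * Vk) (Matrix.diagonal (fun j => (ds j)⁻¹) * Ukᵀ) := by
    have h1 : ((1 : Matrix (Fin k) (Fin k) ℝ))ᵀ * 1 = 1 := by
      rw [Matrix.transpose_one, Matrix.one_mul]
    have := isMP_svd ds hUkUk h1
    rw [Matrix.transpose_one, Matrix.mul_one, Matrix.one_mul] at this
    rw [hAVk]
    exact this
  have hpinvB : pinv (A * Vk) = Matrix.diagonal (fun j => (ds j)⁻¹) * Ukᵀ := pinv_eq hBMP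
  -- the projection P
  set P : Matrix (Fin n) (Fin n) ℝ := Uk * Ukᵀ with hPdef
  have hDDinv : Matrix.diagonal ds * Matrix.diagonal (fun j => (ds j)⁻¹) = 1 := by
    rw [Matrix.diagonal_mul_diagonal]
    rw [show (fun j => ds j * (ds j)⁻¹) = fun _ => (1:ℝ) from funext fun j => mul_inv_cancel₀ (hdsne j)]
    exact Matrix.diagonal_one
  have hAM : A * (Vk * pinv (A * Vk)) = P := by
    calc A * (Vk * pinv (A * Vk)) = (A * Vk) * pinv (A * Vk) := by rw [Matrix.mul_assoc]
    _ = Uk * Matrix.diagonal ds * (Matrix.diagonal (fun j => (ds j)⁻¹) * Ukᵀ) := by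
        rw [hpinvB, hAVk]
    _ = Uk * (Matrix.diagonal ds * Matrix.diagonal (fun j => (ds j)⁻¹)) * Ukᵀ := by
        simp only [Matrix.mul_assoc]
    _ = P := by rw [hDDinv, Matrix.mul_one]
  -- MP inverse of A exists
  have hAMP : IsMP A (pinv A) := by
    refine pinv_isMP ⟨VA * Matrix.diagonal (fun i => (sA i)⁻¹) * UAᵀ, ?_⟩
    rw [hAeq]
    exact isMP_svd sA hU hV
  obtain ⟨hA1, hA2, hA3, hA4⟩ := hAMP
  -- P * projCol A = P
  have hQUk : (A * pinv A) * Uk = Uk := by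
    have hUkA : A * (Vk * Matrix.diagonal (fun j => (ds j)⁻¹)) = Uk := by
      rw [← Matrix.mul_assoc, hAVk, Matrix.mul_assoc, hDDinv, Matrix.mul_one]
    calc (A * pinv A) * Uk = (A * pinv A) * (A * (Vk * Matrix.diagonal fun j => (ds j)⁻¹)) := by
          rw [hUkA]
    _ = ((A * pinv A) * A) * (Vk * Matrix.diagonal fun j => (ds j)⁻¹) := by
        simp only [Matrix.mul_assoc]
    _ = A * (Vk * Matrix.diagonal fun j => (ds j)⁻¹) := by rw [hA1]
    _ = Uk := hUkA
  have hPsym : Pᵀ = P := by rw [hPdef, Matrix.transpose_mul, Matrix.transpose_transpose]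
  have hPQ : P * (A * pinv A) = P := by
    have hQP : (A * pinv A) * P = P := by
      rw [hPdef, ← Matrix.mul_assoc, hQUk]
    have h2 := congrArg Matrix.transpose hQP
    rw [Matrix.transpose_mul, hPsym, hA3] at h2
    exact h2
  -- the bias vector
  set c : Fin n → ℝ := P.mulVec f - A.mulVec xstar with hcdef
  have hcM : c = (P * A - A).mulVec xstar := by
    have h1 : P.mulVec f = (P * A).mulVec xstar := by
      calc P.mulVec f = (P * (A * pinv A)).mulVec f := by rw [hPQ]
      _ = P.mulVec ((A * pinv A).mulVec f) := by rw [← Matrix.mulVec_mulVec]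
      _ = P.mulVec (A.mulVec xstar) := by rw [← projCol, ← hxstar]
      _ = (P * A).mulVec xstar := by rw [Matrix.mulVec_mulVec]
    rw [hcdef, h1, ← Matrix.sub_mulVec]
  -- structure of P * A - A
  set t : Fin (min n d) → ℝ := fun l : Fin (min n d) => (if (l : ℕ) < k then (1:ℝ) else 0) * sA l - sA l with htdef
  have hMt : P * A - A = UA * Matrix.diagonal t * VAᵀ := by
    have hF : Ukᵀ * UA = (1 : Matrix (Fin (min n d)) (Fin (min n d)) ℝ).submatrix (Fin.castLE hkp) id := by
      ext i j
      have h := congrFun (congrFun hU (Fin.castLE hkp i)) j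
      simp only [Matrix.mul_apply, Matrix.transpose_apply] at h
      simp only [Matrix.mul_apply, Matrix.transpose_apply, hUkdef, firstCols,
        Matrix.submatrix_apply, id_eq]
      rw [h]
      rfl
    have hUkF : Uk * ((1 : Matrix (Fin (min n d)) (Fin (min n d)) ℝ).submatrix (Fin.castLE hkp) id)
        = UA * Matrix.diagonal (fun l : Fin (min n d) => if (l : ℕ) < k then (1:ℝ) else 0) := by
      ext i j
      rw [Matrix.mul_apply, Matrix.mul_diagonal]
      simp only [hUkdef, firstCols, Matrix.submatrix_apply, id_eq, Matrix.one_apply]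
      by_cases hj : (j : ℕ) < k
      · rw [Finset.sum_eq_single (⟨(j : ℕ), hj⟩ : Fin k)]
        · rw [show Fin.castLE hkp ⟨(j : ℕ), hj⟩ = j from Fin.ext rfl, if_pos rfl, if_pos hj,
            mul_one]
        · intro b _ hb
          rw [if_neg, mul_zero]
          intro hc2
          exact hb (Fin.ext (by simpa using congrArg Fin.val hc2))
        · simp
      · rw [if_neg hj, mul_zero]
        refine Finset.sum_eq_zero fun b _ => ?_
        rw [if_neg, mul_zero]
        intro hc2
        have := congrArg Fin.val hc2
        simp at this
        omega
    have hPA : P * A = UA * Matrix.diagonal (fun l : Fin (min n d) => (if (l : ℕ) < k then (1:ℝ) else 0) * sA l) * VAᵀ := by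
      calc P * A = Uk * (Ukᵀ * UA) * Matrix.diagonal sA * VAᵀ := by
            rw [hAeq, hPdef]; simp only [Matrix.mul_assoc]
      _ = UA * Matrix.diagonal (fun l : Fin (min n d) => if (l : ℕ) < k then (1:ℝ) else 0)
            * Matrix.diagonal sA * VAᵀ := by rw [hF, hUkF]
      _ = UA * Matrix.diagonal (fun l : Fin (min n d) => (if (l : ℕ) < k then (1:ℝ) else 0) * sA l) * VAᵀ := by
            rw [Matrix.mul_assoc UA, Matrix.diagonal_mul_diagonal]
    calc P * A - A
        = UA * Matrix.diagonal (fun l : Fin (min n d) => (if (l : ℕ) < k then (1:ℝ) else 0) * sA l) * VAᵀ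
          - UA * Matrix.diagonal sA * VAᵀ := by rw [hPA, hAeq]
    _ = UA * (Matrix.diagonal (fun l : Fin (min n d) => (if (l : ℕ) < k then (1:ℝ) else 0) * sA l)
          - Matrix.diagonal sA) * VAᵀ := by rw [Matrix.mul_sub, Matrix.sub_mul]
    _ = UA * Matrix.diagonal t * VAᵀ := by rw [Matrix.diagonal_sub]
  -- bound on t
  have ht2 : ∀ l : Fin (min n d), t l ^ 2 ≤ sv sA (k + 1) ^ 2 := by
    intro l
    by_cases hl : (l : ℕ) < k
    · simp only [htdef, if_pos hl, one_mul, sub_self]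
      simpa using sq_nonneg (sv sA (k + 1))
    · simp only [htdef, if_neg hl, zero_mul, zero_sub, even_two, Even.neg_pow]
      have hkP : k < min n d := lt_of_le_of_lt (Nat.le_of_not_lt hl) l.isLt
      have hsvval : sv sA (k + 1) = sA ⟨k, by omega⟩ := by
        rw [sv]; rw [dif_pos (show k + 1 - 1 < min n d by omega)]
        exact congrArg sA (Fin.ext (by simp))
      rw [hsvval]
      have h1 : sA l ≤ sA ⟨k, by omega⟩ := hmono (Fin.mk_le_mk.mpr (by omega) : (⟨k, by omega⟩ : Fin (min n d)) ≤ l)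
      exact pow_le_pow_left₀ (hposA l) h1 2
  -- bias bound
  have hbias : ∑ i, c i ^ 2 ≤ (∑ i, xstar i ^ 2) * sv sA (k + 1) ^ 2 := by
    have hc2 : c = UA.mulVec ((Matrix.diagonal t).mulVec (VAᵀ.mulVec xstar)) := by
      rw [hcM, hMt, ← Matrix.mulVec_mulVec, ← Matrix.mulVec_mulVec]
    set y : Fin (min n d) → ℝ := VAᵀ.mulVec xstar with hy
    have h1 : ∑ i, c i ^ 2 = ∑ l, ((Matrix.diagonal t).mulVec y l) ^ 2 := by
      rw [hc2]; exact sum_sq_mulVec hU _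
    have h3 : ∑ l, ((Matrix.diagonal t).mulVec y l) ^ 2 ≤ sv sA (k+1) ^ 2 * ∑ l, y l ^ 2 := by
      rw [Finset.mul_sum]
      refine Finset.sum_le_sum fun l _ => ?_
      rw [Matrix.mulVec_diagonal, mul_pow]
      exact mul_le_mul_of_nonneg_right (ht2 l) (sq_nonneg _)
    have h4 : ∑ l, y l ^ 2 ≤ ∑ i, xstar i ^ 2 := sum_sq_tmulVec_le hV xstar
    calc ∑ i, c i ^ 2 ≤ sv sA (k+1) ^ 2 * ∑ l, y l ^ 2 := by rw [h1]; exact h3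
    _ ≤ sv sA (k+1) ^ 2 * ∑ i, xstar i ^ 2 :=
        mul_le_mul_of_nonneg_left h4 (sq_nonneg _)
    _ = (∑ i, xstar i ^ 2) * sv sA (k+1) ^ 2 := mul_comm _ _
  -- integrand rewriting
  have hintegrand : ∀ ω, vnorm (A.mulVec ((Vk * pinv (A * Vk)).mulVec (f + ξ ω)) - A.mulVec xstar) ^ 2
      = ∑ i, (c i + ∑ j, P i j * ξ ω j) ^ 2 := by
    intro ω
    have hvec : A.mulVec ((Vk * pinv (A * Vk)).mulVec (f + ξ ω)) - A.mulVec xstar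
        = fun i => c i + ∑ j, P i j * ξ ω j := by
      have hv : A.mulVec ((Vk * pinv (A * Vk)).mulVec (f + ξ ω)) = P.mulVec (f + ξ ω) := by
        rw [Matrix.mulVec_mulVec, hAM]
      funext i
      rw [Pi.sub_apply, hv, Matrix.mulVec_add]
      have h5 : (P *ᵥ ξ ω) i = ∑ j, P i j * ξ ω j := by
        simp [Matrix.mulVec, dotProduct]
      simp only [Pi.add_apply, hcdef, Pi.sub_apply]
      rw [h5]; ring
    rw [vnorm_sq, hvec]
  -- per-coordinate moments
  have hmem : ∀ i : Fin n, MemLp (fun ω => c i + ∑ j, P i j * ξ ω j) 2 μ := by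
    intro i
    have h1 : MemLp (fun ω => ∑ j, P i j * ξ ω j) 2 μ :=
      memLp_finset_sum Finset.univ (fun j _ => (hL2 j).const_mul (P i j))
    exact (memLp_const (c i)).add h1
  have hterm : ∀ i : Fin n, ∫ ω, (c i + ∑ j, P i j * ξ ω j) ^ 2 ∂μ
      = c i ^ 2 + sig2 * ∑ j, P i j ^ 2 := by
    intro i
    have hZ : Integrable (fun ω => ∑ j, P i j * ξ ω j) μ :=
      integrable_finset_sum _ fun j _ => (integrable_xi μ ξ hL2 j).const_mul _
    have hZ2 : Integrable (fun ω => (∑ j, P i j * ξ ω j) ^ 2) μ :=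
      (memLp_finset_sum Finset.univ (fun j _ => (hL2 j).const_mul (P i j))).integrable_sq
    have hexp : ∀ ω : Ω, (c i + ∑ j, P i j * ξ ω j) ^ 2
        = c i ^ 2 + ((2 * c i) * (∑ j, P i j * ξ ω j) + (∑ j, P i j * ξ ω j) ^ 2) := fun ω => by
      ring
    have hlin := integral_linear μ ξ hL2 hmean (fun j => P i j)
    have hlinsq := integral_linear_sq μ ξ hmeas hL2 hindep sig2 hmean hvar (fun j => P i j)
    calc ∫ ω, (c i + ∑ j, P i j * ξ ω j) ^ 2 ∂μ
        = ∫ ω, (c i ^ 2 + ((2 * c i) * (∑ j, P i j * ξ ω j) + (∑ j, P i j * ξ ω j) ^ 2)) ∂μ := by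
          simp only [hexp]
      _ = c i ^ 2 + ((2 * c i) * ∫ ω, (∑ j, P i j * ξ ω j) ∂μ + ∫ ω, (∑ j, P i j * ξ ω j) ^ 2 ∂μ) := by
          have hZc : Integrable (fun ω => (2 * c i) * (∑ j, P i j * ξ ω j)) μ := hZ.const_mul _
          have hadd : Integrable (fun ω => (2 * c i) * (∑ j, P i j * ξ ω j)
              + (∑ j, P i j * ξ ω j) ^ 2) μ := by exact hZc.add hZ2
          rw [integral_add (integrable_const _) hadd, integral_add hZc hZ2,
            integral_const, integral_const_mul]
          simp [measure_univ]
      _ = c i ^ 2 + sig2 * ∑ j, P i j ^ 2 := by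
          rw [hlin, hlinsq]; ring
  -- the integral of the squared norm
  have hLHS : (∫ ω, vnorm (A.mulVec ((Vk * pinv (A * Vk)).mulVec (f + ξ ω)) - A.mulVec xstar) ^ 2 ∂μ)
      = ∑ i, c i ^ 2 + sig2 * (k : ℝ) := by
    calc (∫ ω, vnorm (A.mulVec ((Vk * pinv (A * Vk)).mulVec (f + ξ ω)) - A.mulVec xstar) ^ 2 ∂μ)
        = ∫ ω, ∑ i, (c i + ∑ j, P i j * ξ ω j) ^ 2 ∂μ := by
          exact integral_congr_ae (Filter.Eventually.of_forall fun ω => hintegrand ω)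
    _ = ∑ i, ∫ ω, (c i + ∑ j, P i j * ξ ω j) ^ 2 ∂μ :=
        integral_finset_sum _ (fun i _ => (hmem i).integrable_sq)
    _ = ∑ i, (c i ^ 2 + sig2 * ∑ j, P i j ^ 2) := Finset.sum_congr rfl (fun i _ => hterm i)
    _ = ∑ i, c i ^ 2 + sig2 * ∑ i, ∑ j, P i j ^ 2 := by
        rw [Finset.sum_add_distrib, Finset.mul_sum]
    _ = ∑ i, c i ^ 2 + sig2 * (k : ℝ) := by
        rw [hPdef, sum_sq_proj hUkUk]
  rw [hLHS, ← add_div]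
  have hfinal : ∑ i, c i ^ 2 + sig2 * (k : ℝ)
      ≤ vnorm xstar ^ 2 * sv sA (k + 1) ^ 2 + sig2 * (k : ℝ) := by
    rw [vnorm_sq]
    linarith
  have hnpos : (0:ℝ) < (n:ℝ) := by exact_mod_cast hn0
  exact div_le_div_of_nonneg_right hfinal hnpos.le |>.trans_eq rfl
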